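/- Let n and r be natural numbers with 1 ≤ r ≤ n, and let L(U_{r,n}) be the finite lattice consisting of all subsets A of Fin n with |A| < r together with the full set Fin n, ordered by inclusion. Let μ denote the Möbius function of this poset (with integer values). Then for every element A of L(U_{r,n}) with |A| = i < r, one has μ(A, Fin n) = (−1)^{r−i}·C(n−i−1, r−i−1), where C denotes the binomial coefficient. -/

import Mathlib

open Finset

private lemma alt_sum_choose (N' m : ℕ) :
    ∑ j ∈ Finset.range (m+1), (-1:ℤ)^j * ((N'+1).choose j) = (-1)^m * (N'.choose m) := by
  induction m with
  | zero => simp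
  | succ m ih =>
    rw [Finset.sum_range_succ, ih, Nat.choose_succ_succ (N') (m)]
    push_cast
    ring

private lemma interval_alt {n : ℕ} (A z : Finset (Fin n)) (hAz : A ⊆ z) :
    ∑ w ∈ z.powerset.filter (fun w => A ⊆ w), (-1:ℤ)^((w \ A).card)
      = if A = z then 1 else 0 := by
  have h1 : ∑ w ∈ z.powerset.filter (fun w => A ⊆ w), (-1:ℤ)^((w \ A).card)
      = ∑ t ∈ (z \ A).powerset, (-1:ℤ)^t.card :=
    Finset.sum_nbij' (fun w => w \ A) (fun t => A ∪ t)
      (fun w hw => by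
        simp only [Finset.mem_filter, Finset.mem_powerset] at hw
        exact Finset.mem_powerset.mpr (Finset.sdiff_subset_sdiff hw.1 (le_refl A)))
      (fun t ht => by
        simp only [Finset.mem_powerset] at ht
        simp only [Finset.mem_filter, Finset.mem_powerset]
        exact ⟨Finset.union_subset hAz (ht.trans Finset.sdiff_subset), Finset.subset_union_left⟩)
      (fun w hw => by
        simp only [Finset.mem_filter, Finset.mem_powerset] at hw
        exact Finset.union_sdiff_of_subset hw.2)
      (fun t ht => by
        simp only [Finset.mem_powerset] at ht
        exact Finset.union_sdiff_cancel_left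
          (Finset.disjoint_of_subset_right ht Finset.disjoint_sdiff))
      (fun w _ => rfl)
  rw [h1, Finset.sum_powerset_neg_one_pow_card]
  congr 1
  rw [eq_iff_iff, Finset.sdiff_eq_empty_iff_subset]
  exact ⟨fun h => Finset.Subset.antisymm hAz h, fun h => h ▸ Finset.Subset.refl _⟩

private lemma trunc_alt {α : Type*} [DecidableEq α] (S : Finset α) (m : ℕ) :
    ∑ w ∈ S.powerset.filter (fun w => w.card ≤ m), (-1:ℤ)^w.card
      = ∑ j ∈ Finset.range (m+1), (-1:ℤ)^j * (S.card.choose j) := by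
  have hset : S.powerset.filter (fun w => w.card ≤ m)
      = (Finset.range (m+1)).biUnion (fun j => Finset.powersetCard j S) := by
    ext w
    simp only [Finset.mem_filter, Finset.mem_powerset, Finset.mem_biUnion, Finset.mem_range,
      Finset.mem_powersetCard, Nat.lt_succ_iff]
    constructor
    · rintro ⟨h1, h2⟩; exact ⟨w.card, h2, h1, rfl⟩
    · rintro ⟨j, hj, h1, rfl⟩; exact ⟨h1, hj⟩
  rw [hset, Finset.sum_biUnion]
  · apply Finset.sum_congr rfl
    intro j _
    have : ∑ w ∈ Finset.powersetCard j S, (-1:ℤ)^w.card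
        = ∑ w ∈ Finset.powersetCard j S, (-1:ℤ)^j := by
      apply Finset.sum_congr rfl
      intro w hw
      rw [(Finset.mem_powersetCard.mp hw).2]
    rw [this, Finset.sum_const, Finset.card_powersetCard, nsmul_eq_mul]
    ring
  · intro i _ j _ hij
    apply Finset.disjoint_left.mpr
    intro w hwi hwj
    exact hij ((Finset.mem_powersetCard.mp hwi).2.symm.trans (Finset.mem_powersetCard.mp hwj).2)

/-- Let `L(U_{r,n})` (for `1 ≤ r ≤ n`) be the lattice of flats of the rank `r` uniform
matroid on `n` elements: all subsets of `Fin n` of cardinality `< r` together with the full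
set, ordered by inclusion.  If `μ` is its (integer-valued) Möbius function, i.e.
`μ p p = 1` and `Σ_{p ⊆ z ⊆ q} μ p z = 0` whenever `p ⊊ q`, then for every element `A`
with `|A| = i < r`, one has `μ(A, Fin n) = (−1)^{r−i}·C(n−i−1, r−i−1)`. -/
theorem mobius_uniform_flats_top (n r : ℕ) (hr : 1 ≤ r) (hrn : r ≤ n)
    (μ : {A : Finset (Fin n) // A.card < r ∨ A = Finset.univ} →
         {A : Finset (Fin n) // A.card < r ∨ A = Finset.univ} → ℤ)
    (hrefl : ∀ p, μ p p = 1)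
    (hsum : ∀ p q, p.1 ⊆ q.1 → p ≠ q →
      ∑ z ∈ Finset.univ.filter (fun z => p.1 ⊆ z.1 ∧ z.1 ⊆ q.1), μ p z = 0) :
    ∀ A : {A : Finset (Fin n) // A.card < r ∨ A = Finset.univ}, A.1.card < r →
      μ A ⟨Finset.univ, Or.inr rfl⟩ =
        (-1 : ℤ) ^ (r - A.1.card) * (Nat.choose (n - A.1.card - 1) (r - A.1.card - 1) : ℤ) := by
  -- Step 1: Möbius values inside the Boolean part
  have key : ∀ k (z : {A : Finset (Fin n) // A.card < r ∨ A = Finset.univ}), z.1.card ≤ k → z.1.card < r → ∀ A : {A : Finset (Fin n) // A.card < r ∨ A = Finset.univ}, A.1 ⊆ z.1 →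
      μ A z = (-1:ℤ)^((z.1 \ A.1).card) := by
    intro k
    induction k with
    | zero =>
      intro z hz hzr A hAz
      have hz0 : z.1 = ∅ := Finset.card_eq_zero.mp (Nat.le_antisymm hz (Nat.zero_le _))
      have hA0 : A.1 = ∅ := Finset.subset_empty.mp (hz0 ▸ hAz)
      have hA : A = z := Subtype.ext (hA0.trans hz0.symm)
      rw [hA, hrefl]
      simp
    | succ k ih =>
      intro z hz hzr A hAz
      by_cases h : A.1 = z.1
      · have hA : A = z := Subtype.ext h
        rw [hA, hrefl]
        simp
      · have hne : A ≠ z := fun e => h (congrArg Subtype.val e)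
        have h0 := hsum A z hAz hne
        set F := Finset.univ.filter (fun w : {A : Finset (Fin n) // A.card < r ∨ A = Finset.univ} => A.1 ⊆ w.1 ∧ w.1 ⊆ z.1) with hF
        have hzF : z ∈ F := by
          simp only [hF, Finset.mem_filter, Finset.mem_univ, true_and]; exact ⟨hAz, Finset.Subset.refl _⟩
        rw [← Finset.add_sum_erase F _ hzF] at h0
        have hsub : ∑ w ∈ F.erase z, μ A w
            = ∑ w ∈ F.erase z, (-1:ℤ)^((w.1 \ A.1).card) := by
          apply Finset.sum_congr rfl
          intro w hw
          have hwz : w ≠ z := Finset.ne_of_mem_erase hw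
          have hw' := Finset.mem_of_mem_erase hw
          simp only [hF, Finset.mem_filter, Finset.mem_univ, true_and] at hw'
          have hssub : w.1 ⊂ z.1 := hw'.2.ssubset_of_ne (fun e => hwz (Subtype.ext e))
          have hcard : w.1.card < z.1.card := Finset.card_lt_card hssub
          exact ih w (by omega) (by omega) A hw'.1
        have hFsum : ∑ w ∈ F, (-1:ℤ)^((w.1 \ A.1).card)
            = ∑ w ∈ z.1.powerset.filter (fun w => A.1 ⊆ w), (-1:ℤ)^((w \ A.1).card) := by
          refine (Finset.sum_bij
            (fun w hw => (⟨w, Or.inl (lt_of_le_of_lt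
              (Finset.card_le_card (Finset.mem_powerset.mp (Finset.mem_filter.mp hw).1)) hzr)⟩ : {A : Finset (Fin n) // A.card < r ∨ A = Finset.univ}))
            ?_ ?_ ?_ ?_).symm
          · intro a ha
            simp only [Finset.mem_filter, Finset.mem_powerset] at ha
            simp only [hF, Finset.mem_filter, Finset.mem_univ, true_and]; exact ⟨ha.2, ha.1⟩
          · intro a ha b hb e
            exact congrArg Subtype.val e
          · intro b hb
            simp only [hF, Finset.mem_filter, Finset.mem_univ, true_and] at hb
            exact ⟨b.1, Finset.mem_filter.mpr ⟨Finset.mem_powerset.mpr hb.2, hb.1⟩, Subtype.ext rfl⟩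
          · intro a _
            rfl
        have htot : ∑ w ∈ F, (-1:ℤ)^((w.1 \ A.1).card) = 0 := by
          rw [hFsum, interval_alt A.1 z.1 hAz, if_neg h]
        rw [← Finset.add_sum_erase F _ hzF] at htot
        linarith [h0, htot, hsub]
  -- Step 2: the value at the top
  intro A hA
  set T : {A : Finset (Fin n) // A.card < r ∨ A = Finset.univ} := ⟨Finset.univ, Or.inr rfl⟩ with hT
  have hcu : (Finset.univ : Finset (Fin n)).card = n := by simp
  have hAne : A ≠ T := by
    intro e
    have : A.1 = Finset.univ := congrArg Subtype.val e
    rw [this, hcu] at hA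
    omega
  have h0 := hsum A T (Finset.subset_univ _) hAne
  set F := Finset.univ.filter (fun w : {A : Finset (Fin n) // A.card < r ∨ A = Finset.univ} => A.1 ⊆ w.1 ∧ w.1 ⊆ T.1) with hF
  have hTF : T ∈ F := by
    simp only [hF, Finset.mem_filter, Finset.mem_univ, true_and]; exact ⟨Finset.subset_univ _, Finset.subset_univ _⟩
  rw [← Finset.add_sum_erase F _ hTF] at h0
  have hwlt : ∀ w : {A : Finset (Fin n) // A.card < r ∨ A = Finset.univ}, w ≠ T → w.1.card < r := by
    intro w hw
    rcases w.2 with h | h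
    · exact h
    · exact absurd (Subtype.ext h) hw
  have hsub : ∑ w ∈ F.erase T, μ A w
      = ∑ w ∈ F.erase T, (-1:ℤ)^((w.1 \ A.1).card) := by
    apply Finset.sum_congr rfl
    intro w hw
    have hwT : w ≠ T := Finset.ne_of_mem_erase hw
    have hw' := Finset.mem_of_mem_erase hw
    simp only [hF, Finset.mem_filter, Finset.mem_univ, true_and] at hw'
    exact key w.1.card w le_rfl (hwlt w hwT) A hw'.1
  -- identify the erased sum with an ambient sum
  have hG : ∑ w ∈ F.erase T, (-1:ℤ)^((w.1 \ A.1).card)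
      = ∑ w ∈ Finset.univ.powerset.filter (fun w : Finset (Fin n) => A.1 ⊆ w ∧ w.card < r),
          (-1:ℤ)^((w \ A.1).card) := by
    refine (Finset.sum_bij
      (fun w hw => (⟨w, Or.inl (Finset.mem_filter.mp hw).2.2⟩ : {A : Finset (Fin n) // A.card < r ∨ A = Finset.univ}))
      ?_ ?_ ?_ ?_).symm
    · intro a ha
      simp only [Finset.mem_filter, Finset.mem_powerset] at ha
      apply Finset.mem_erase.mpr
      constructor
      · intro e
        have : a = Finset.univ := congrArg Subtype.val e
        rw [this, hcu] at ha
        omega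
      · simp only [hF, Finset.mem_filter, Finset.mem_univ, true_and]; exact ⟨ha.2.1, Finset.subset_univ _⟩
    · intro a ha b hb e
      exact congrArg Subtype.val e
    · intro b hb
      have hbT : b ≠ T := Finset.ne_of_mem_erase hb
      have hb' := Finset.mem_of_mem_erase hb
      simp only [hF, Finset.mem_filter, Finset.mem_univ, true_and] at hb'
      exact ⟨b.1, Finset.mem_filter.mpr ⟨Finset.mem_powerset.mpr (Finset.subset_univ _),
        hb'.1, hwlt b hbT⟩, Subtype.ext rfl⟩
    · intro a _
      rfl
  -- transform to a truncated alternating sum over the complement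
  set i := A.1.card with hi
  set m := r - 1 - i with hm
  have hdisj : Disjoint A.1 (Finset.univ \ A.1) := Finset.disjoint_sdiff
  have hamb : ∑ w ∈ Finset.univ.powerset.filter (fun w : Finset (Fin n) => A.1 ⊆ w ∧ w.card < r),
        (-1:ℤ)^((w \ A.1).card)
      = ∑ t ∈ (Finset.univ \ A.1).powerset.filter (fun t => t.card ≤ m), (-1:ℤ)^t.card := by
    refine Finset.sum_nbij' (fun w => w \ A.1) (fun t => A.1 ∪ t) ?_ ?_ ?_ ?_ ?_
    · intro w hw
      simp only [Finset.mem_filter, Finset.mem_powerset] at hw ⊢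
      obtain ⟨_, hAw, hwr⟩ := hw
      constructor
      · exact Finset.sdiff_subset_sdiff (Finset.subset_univ _) (le_refl A.1)
      · have : (w \ A.1).card = w.card - i := by rw [Finset.card_sdiff_of_subset hAw]
        omega
    · intro t ht
      simp only [Finset.mem_filter, Finset.mem_powerset] at ht ⊢
      obtain ⟨htS, htm⟩ := ht
      have hdt : Disjoint A.1 t := Finset.disjoint_of_subset_right htS Finset.disjoint_sdiff
      have hcard : (A.1 ∪ t).card = i + t.card := by
        rw [Finset.card_union_of_disjoint hdt]
      exact ⟨Finset.subset_univ _, Finset.subset_union_left, by omega⟩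
    · intro w hw
      simp only [Finset.mem_filter, Finset.mem_powerset] at hw
      exact Finset.union_sdiff_of_subset hw.2.1
    · intro t ht
      simp only [Finset.mem_filter, Finset.mem_powerset] at ht
      exact Finset.union_sdiff_cancel_left
        (Finset.disjoint_of_subset_right ht.1 Finset.disjoint_sdiff)
    · intro w _
      rfl
  have hScard : (Finset.univ \ A.1).card = n - i := by
    rw [Finset.card_sdiff_of_subset (Finset.subset_univ _), hcu]
  have hni : n - i = (n - i - 1) + 1 := by omega
  have htrunc : ∑ t ∈ (Finset.univ \ A.1).powerset.filter (fun t => t.card ≤ m), (-1:ℤ)^t.card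
      = (-1:ℤ)^m * ((n - i - 1).choose m) := by
    rw [trunc_alt, hScard]
    conv_lhs => rw [hni]
    rw [alt_sum_choose]
  have hfinal : μ A T = -((-1:ℤ)^m * ((n - i - 1).choose m)) := by
    linarith [h0, hsub, hG, hamb, htrunc]
  rw [hfinal]
  have hrm : r - i = m + 1 := by omega
  have hrm1 : r - i - 1 = m := by omega
  rw [hrm, pow_succ]
  simp only [Nat.add_sub_cancel]
  ring
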